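/- Let α ∈ ℂ, let E_2 be the 2×2 matrix with a 1 in the (1,2) entry and zeros elsewhere, and set Ξ = (Ξ_1, Ξ_2) = (α I_2 + E_2, α E_2). Then Ξ is convexotonic, i.e., Ξ_k Ξ_j = Σ_{s=1}^2 (Ξ_j)_{k,s} Ξ_s for all j,k ∈ {1,2}; and for every n and every pair X = (X_1,X_2) of n×n complex matrices with I − αX_1 invertible, the matrix I − Λ_Ξ(X) is invertible and the associated convexotonic map satisfies X(I − Λ_Ξ(X))^{-1} = ( X_1(I−αX_1)^{-1}, (I−αX_1)^{-1}(X_2 + X_1^2)(I−αX_1)^{-1} ). -/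

import Mathlib

open scoped Kronecker Matrix Matrix.Norms.L2Operator ComplexOrder

noncomputable section

/-- `Λ_A(X) = Σⱼ Aⱼ ⊗ Xⱼ` (Kronecker product), a `dn × dn` matrix. -/
def lamK {g d n : ℕ} (A : Fin g → Matrix (Fin d) (Fin d) ℂ)
    (X : Fin g → Matrix (Fin n) (Fin n) ℂ) :
    Matrix (Fin d × Fin n) (Fin d × Fin n) ℂ :=
  ∑ j, (A j) ⊗ₖ (X j)

/-- `L_A(X) = I + Λ_A(X) + Λ_A(X)^*`. -/
def Lpen {g d n : ℕ} (A : Fin g → Matrix (Fin d) (Fin d) ℂ)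
    (X : Fin g → Matrix (Fin n) (Fin n) ℂ) :
    Matrix (Fin d × Fin n) (Fin d × Fin n) ℂ :=
  1 + lamK A X + (lamK A X)ᴴ

/-- The `n × n` block of a `gn × gn` matrix in position `(j, i)`. -/
def blk {g n : ℕ} (M : Matrix (Fin g × Fin n) (Fin g × Fin n) ℂ) (j i : Fin g) :
    Matrix (Fin n) (Fin n) ℂ :=
  fun a b => M (j, a) (i, b)

/-- The convexotonic map `p(X) = X (I - Λ_Ξ(X))⁻¹`, given blockwise by
`p(X)ᵢ = Σⱼ Xⱼ [(I - Λ_Ξ(X))⁻¹]_{j,i}`. -/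
def pmap {g n : ℕ} (Ξ : Fin g → Matrix (Fin g) (Fin g) ℂ)
    (X : Fin g → Matrix (Fin n) (Fin n) ℂ) : Fin g → Matrix (Fin n) (Fin n) ℂ :=
  fun i => ∑ j, X j * blk ((1 - lamK Ξ X)⁻¹) j i

/-- The convexotonic map `q(X) = X (I + Λ_Ξ(X))⁻¹`, given blockwise by
`q(X)ᵢ = Σⱼ Xⱼ [(I + Λ_Ξ(X))⁻¹]_{j,i}`. -/
def qmap {g n : ℕ} (Ξ : Fin g → Matrix (Fin g) (Fin g) ℂ)
    (X : Fin g → Matrix (Fin n) (Fin n) ℂ) : Fin g → Matrix (Fin n) (Fin n) ℂ :=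
  fun i => ∑ j, X j * blk ((1 + lamK Ξ X)⁻¹) j i

/-- A tuple `Ξ` of `g × g` matrices is convexotonic if
`Ξ_k Ξ_j = Σ_s (Ξ_j)_{k,s} Ξ_s` for all `j, k`. -/
def Convexotonic {g : ℕ} (Ξ : Fin g → Matrix (Fin g) (Fin g) ℂ) : Prop :=
  ∀ j k, Ξ k * Ξ j = ∑ s, (Ξ j) k s • Ξ s

/-- `Λ_A(α) = Σⱼ αⱼ Aⱼ` for a scalar point `α ∈ ℂ^g`. -/
def lamScalar {g d : ℕ} (A : Fin g → Matrix (Fin d) (Fin d) ℂ) (α : Fin g → ℂ) :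
    Matrix (Fin d) (Fin d) ℂ :=
  ∑ j, α j • A j

/-- A hyperbasis of `ℂ^d`: `d+1` vectors, each `d` of which form a basis. -/
def Hyperbasis {d : ℕ} (u : Fin (d + 1) → (Fin d → ℂ)) : Prop :=
  ∀ i : Fin (d + 1),
    LinearIndependent ℂ (fun j : {j : Fin (d + 1) // j ≠ i} => u j) ∧
    Submodule.span ℂ (Set.range fun j : {j : Fin (d + 1) // j ≠ i} => u j) = ⊤

/-- The tuple `A ∈ M_d(ℂ)^g` is sv-generic. -/
def SvGeneric {g d : ℕ} (A : Fin g → Matrix (Fin d) (Fin d) ℂ) : Prop :=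
  (∃ (α : Fin (d + 1) → (Fin g → ℂ)) (u : Fin (d + 1) → (Fin d → ℂ)),
    (∀ j, (1 - (lamScalar A (α j))ᴴ * lamScalar A (α j)).PosSemidef ∧
      u j ≠ 0 ∧
      LinearMap.ker (Matrix.mulVecLin (1 - (lamScalar A (α j))ᴴ * lamScalar A (α j)))
        = Submodule.span ℂ {u j}) ∧
    Hyperbasis u) ∧
  (∃ (β : Fin d → (Fin g → ℂ)) (v : Fin d → (Fin d → ℂ)),
    (∀ k, (1 - lamScalar A (β k) * (lamScalar A (β k))ᴴ).PosSemidef ∧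
      v k ≠ 0 ∧
      LinearMap.ker (Matrix.mulVecLin (1 - lamScalar A (β k) * (lamScalar A (β k))ᴴ))
        = Submodule.span ℂ {v k}) ∧
    LinearIndependent ℂ v ∧ Submodule.span ℂ (Set.range v) = ⊤)

/-- Evaluation of a `k × l` matrix of noncommutative polynomials at a tuple of
`n × n` matrices, yielding a `kn × ln` matrix. -/
def polyEval {k l g n : ℕ} (Q : Matrix (Fin k) (Fin l) (FreeAlgebra ℂ (Fin g)))
    (X : Fin g → Matrix (Fin n) (Fin n) ℂ) :
    Matrix (Fin k × Fin n) (Fin l × Fin n) ℂ :=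
  fun a b => (FreeAlgebra.lift ℂ X) (Q a.1 b.1) a.2 b.2

/-- `E₂`: the `2 × 2` matrix unit in position `(1,2)`. -/
def E2 : Matrix (Fin 2) (Fin 2) ℂ := Matrix.single 0 1 1


section Aux

variable {n : ℕ}

lemma commute_invD (α : ℂ) (X0 : Matrix (Fin n) (Fin n) ℂ)
    (h : IsUnit ((1 : Matrix (Fin n) (Fin n) ℂ) - α • X0).det) :
    X0 * ((1 : Matrix (Fin n) (Fin n) ℂ) - α • X0)⁻¹
      = ((1 : Matrix (Fin n) (Fin n) ℂ) - α • X0)⁻¹ * X0 := by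
  set D := (1 : Matrix (Fin n) (Fin n) ℂ) - α • X0 with hDdef
  have hDi : D * D⁻¹ = 1 := Matrix.mul_nonsing_inv D h
  have hiD : D⁻¹ * D = 1 := Matrix.nonsing_inv_mul D h
  have hcomm : D * X0 = X0 * D := by
    simp [hDdef, sub_mul, mul_sub, Matrix.smul_mul, Matrix.mul_smul]
  calc X0 * D⁻¹ = (D⁻¹ * D) * (X0 * D⁻¹) := by rw [hiD, one_mul]
    _ = D⁻¹ * (D * X0) * D⁻¹ := by simp only [mul_assoc]
    _ = D⁻¹ * X0 * (D * D⁻¹) := by rw [hcomm]; simp only [mul_assoc]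
    _ = D⁻¹ * X0 := by rw [hDi, mul_one]

end Aux

/-- the tuple `Ξ = (α I₂ + E₂, α E₂)` is convexotonic, and whenever
`I - α X₁` is invertible so is `I - Λ_Ξ(X)`, with
`X(I - Λ_Ξ(X))⁻¹ = (X₁(I-αX₁)⁻¹, (I-αX₁)⁻¹ (X₂ + X₁²)(I-αX₁)⁻¹)`. -/
theorem composite_map_is_convexotonic (α : ℂ) :
    Convexotonic ![α • (1 : Matrix (Fin 2) (Fin 2) ℂ) + E2, α • E2] ∧
    ∀ (n : ℕ) (X : Fin 2 → Matrix (Fin n) (Fin n) ℂ),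
      IsUnit (1 - α • X 0) →
        IsUnit (1 - lamK ![α • (1 : Matrix (Fin 2) (Fin 2) ℂ) + E2, α • E2] X) ∧
        pmap ![α • (1 : Matrix (Fin 2) (Fin 2) ℂ) + E2, α • E2] X 0
          = X 0 * (1 - α • X 0)⁻¹ ∧
        pmap ![α • (1 : Matrix (Fin 2) (Fin 2) ℂ) + E2, α • E2] X 1
          = (1 - α • X 0)⁻¹ * (X 1 + X 0 * X 0) * (1 - α • X 0)⁻¹ := by
  classical
  constructor
  · intro j k
    fin_cases j <;> fin_cases k <;>
      · ext a b
        fin_cases a <;> fin_cases b <;>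
          simp [E2, Matrix.mul_apply, Fin.sum_univ_two, Matrix.single,
            Matrix.one_apply, Matrix.smul_apply, Matrix.add_apply]
  · intro n X hD
    set Ξ : Fin 2 → Matrix (Fin 2) (Fin 2) ℂ :=
      ![α • (1 : Matrix (Fin 2) (Fin 2) ℂ) + E2, α • E2] with hXi
    set D := (1 : Matrix (Fin n) (Fin n) ℂ) - α • X 0 with hDdef
    have hdet : IsUnit D.det := (Matrix.isUnit_iff_isUnit_det D).mp hD
    have hDi : D * D⁻¹ = 1 := Matrix.mul_nonsing_inv D hdet
    have hiD : D⁻¹ * D = 1 := Matrix.nonsing_inv_mul D hdet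
    have hc : X 0 * D⁻¹ = D⁻¹ * X 0 := commute_invD α (X 0) hdet
    set Y : Matrix (Fin n) (Fin n) ℂ := X 0 + α • X 1 with hYdef
    set Am : Fin 2 → Fin 2 → Matrix (Fin n) (Fin n) ℂ := ![![D, -Y], ![0, D]] with hAm
    set Bm : Fin 2 → Fin 2 → Matrix (Fin n) (Fin n) ℂ :=
      ![![D⁻¹, D⁻¹ * Y * D⁻¹], ![0, D⁻¹]] with hBm
    set N : Matrix (Fin 2 × Fin n) (Fin 2 × Fin n) ℂ :=
      Matrix.of (fun p q => (Bm p.1 q.1) p.2 q.2) with hN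
    have hblk : ∀ (j k : Fin 2) (a c : Fin n),
        (1 - lamK Ξ X) (j, a) (k, c) = (Am j k) a c := by
      intro j k a c
      fin_cases j <;> fin_cases k <;>
        simp [hAm, hXi, lamK, E2, hDdef, hYdef, Fin.sum_univ_two,
          Matrix.one_apply, Matrix.single, Prod.ext_iff]
    have key : ∀ j i : Fin 2,
        Am j 0 * Bm 0 i + Am j 1 * Bm 1 i = if j = i then 1 else 0 := by
      intro j i
      fin_cases j <;> fin_cases i <;>
        simp [hAm, hBm]
      · exact hDi
      · have : D * (D⁻¹ * Y * D⁻¹) = Y * D⁻¹ := by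
          calc D * (D⁻¹ * Y * D⁻¹) = (D * D⁻¹) * (Y * D⁻¹) := by
                simp only [mul_assoc]
            _ = Y * D⁻¹ := by rw [hDi, one_mul]
        rw [this]
        exact add_neg_cancel _
      · exact hDi
    have hMN : (1 - lamK Ξ X) * N = 1 := by
      ext ⟨j, a⟩ ⟨i, b⟩
      rw [Matrix.mul_apply, Fintype.sum_prod_type]
      have hsum : ∀ k : Fin 2,
          ∑ c, (1 - lamK Ξ X) (j, a) (k, c) * N (k, c) (i, b)
            = (Am j k * Bm k i) a b := by
        intro k
        rw [Matrix.mul_apply]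
        refine Finset.sum_congr rfl fun c _ => ?_
        rw [hblk]
        rfl
      rw [Fin.sum_univ_two, hsum 0, hsum 1, ← Matrix.add_apply, key]
      by_cases h : j = i <;>
        simp [h, Matrix.one_apply, Prod.ext_iff]
    have hUnit : IsUnit (1 - lamK Ξ X) := by
      refine (Matrix.isUnit_iff_isUnit_det _).mpr ?_
      exact IsUnit.of_mul_eq_one N.det
        (by rw [← Matrix.det_mul, hMN, Matrix.det_one])
    have hinv : (1 - lamK Ξ X)⁻¹ = N := Matrix.inv_eq_right_inv hMN
    have hblkN : ∀ j i : Fin 2, blk N j i = Bm j i := by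
      intro j i; ext a b; rfl
    refine ⟨hUnit, ?_, ?_⟩
    · show ∑ j, X j * blk ((1 - lamK Ξ X)⁻¹) j 0 = X 0 * D⁻¹
      rw [hinv, Fin.sum_univ_two, hblkN, hblkN]
      simp [hBm]
    · show ∑ j, X j * blk ((1 - lamK Ξ X)⁻¹) j 1 = D⁻¹ * (X 1 + X 0 * X 0) * D⁻¹
      rw [hinv, Fin.sum_univ_two, hblkN, hblkN]
      have h1 : X 0 * (D⁻¹ * Y * D⁻¹) = D⁻¹ * (X 0 * Y) * D⁻¹ := by
        calc X 0 * (D⁻¹ * Y * D⁻¹) = (X 0 * D⁻¹) * Y * D⁻¹ := by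
              simp only [mul_assoc]
          _ = D⁻¹ * (X 0 * Y) * D⁻¹ := by rw [hc]; simp only [mul_assoc]
      have h2 : X 1 * D⁻¹ = D⁻¹ * (D * X 1) * D⁻¹ := by
        calc X 1 * D⁻¹ = (D⁻¹ * D) * (X 1 * D⁻¹) := by rw [hiD, one_mul]
          _ = D⁻¹ * (D * X 1) * D⁻¹ := by simp only [mul_assoc]
      have h3 : X 0 * Y + D * X 1 = X 1 + X 0 * X 0 := by
        simp only [hYdef, hDdef, mul_add, sub_mul, one_mul, Matrix.smul_mul,
          Matrix.mul_smul]
        abel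
      calc X 0 * Bm 0 1 + X 1 * Bm 1 1
          = X 0 * (D⁻¹ * Y * D⁻¹) + X 1 * D⁻¹ := by simp [hBm]
        _ = D⁻¹ * (X 0 * Y) * D⁻¹ + D⁻¹ * (D * X 1) * D⁻¹ := by rw [h1, h2]
        _ = D⁻¹ * (X 0 * Y + D * X 1) * D⁻¹ := by
            rw [← add_mul, ← mul_add]
        _ = D⁻¹ * (X 1 + X 0 * X 0) * D⁻¹ := by rw [h3]
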